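/- In any HR instance, if a resident is unmatched in some stable matching, then that resident is unmatched in every envy-free matching. -/

import Mathlib

/-- An HRLQ instance: bipartite graph on residents `R` and hospitals `H` with
strict preferences encoded as rank functions (lower rank = more preferred)
and lower/upper quotas per hospital. -/
structure HRLQ (R H : Type) where
  E : R → H → Prop
  rPref : R → H → ℕ
  hPref : H → R → ℕ
  lq : H → ℕ
  uq : H → ℕ

namespace HRLQ

variable {R H : Type}

/-- residents matched to hospital `h` -/
def matchedTo (M : R → Option H) (h : H) : Set R := {r | M r = some h}

/-- size of a matching -/
noncomputable def msize (M : R → Option H) : ℕ := {r | M r ≠ none}.ncard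

variable (I : HRLQ R H)

/-- resident `r` strictly prefers hospital `h` to assignment `o`
    (being unmatched is least preferred); `h` must be acceptable to `r`. -/
def PrefersH (r : R) (h : H) (o : Option H) : Prop :=
  I.E r h ∧ ∀ h', o = some h' → I.rPref r h < I.rPref r h'

def IsMatching (M : R → Option H) : Prop :=
  (∀ r h, M r = some h → I.E r h) ∧ ∀ h, (matchedTo M h).ncard ≤ I.uq h

def Feasible (M : R → Option H) : Prop :=
  ∀ h, I.lq h ≤ (matchedTo M h).ncard

def Blocks (M : R → Option H) (r : R) (h : H) : Prop :=
  I.E r h ∧ M r ≠ some h ∧ I.PrefersH r h (M r) ∧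
    ((matchedTo M h).ncard < I.uq h ∨ ∃ r' ∈ matchedTo M h, I.hPref h r < I.hPref h r')

def Stable (M : R → Option H) : Prop := ∀ r h, ¬ I.Blocks M r h

def Envies (M : R → Option H) (r r' : R) : Prop :=
  ∃ h, M r' = some h ∧ I.PrefersH r h (M r) ∧ I.hPref h r < I.hPref h r'

def EnvyFree (M : R → Option H) : Prop := ∀ r r', ¬ I.Envies M r r'

def RelaxedStable (M : R → Option H) : Prop :=
  (∀ h, {r | r ∈ matchedTo M h ∧ ∃ h', I.Blocks M r h'}.ncard ≤ I.lq h) ∧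
  ∀ r, M r = none → ∀ h, ¬ I.Blocks M r h

/-- preferences are strict -/
def StrictPrefs : Prop :=
  (∀ r, Function.Injective (I.rPref r)) ∧ ∀ h, Function.Injective (I.hPref h)

end HRLQ

/-- If a resident is unmatched in some stable matching of an HR instance,
then it is unmatched in every envy-free matching. -/
theorem unmatched_in_stable_implies_unmatched_in_envy_free
    {R H : Type} [Fintype R] [Fintype H] (I : HRLQ R H)
    (hstrict : I.StrictPrefs)
    (Ms Me : R → Option H)
    (hMs : I.IsMatching Ms) (hMsStable : I.Stable Ms)
    (hMe : I.IsMatching Me) (hMeEF : I.EnvyFree Me)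
    (r : R) (hr : Ms r = none) :
    Me r = none := by
  classical
  by_contra hne
  obtain ⟨h0, hh0⟩ : ∃ h0, Me r = some h0 := Option.ne_none_iff_exists'.mp hne
  -- the set of "improved" residents
  set S : Set R := {x | ∃ h, Me x = some h ∧ I.PrefersH x h (Ms x)} with hSdef
  have hr0S : r ∈ S := by
    refine ⟨h0, hh0, hMe.1 r h0 hh0, ?_⟩
    intro h' hh'
    rw [hr] at hh'
    exact absurd hh' (by simp)
  -- key structural facts at the hospital of an improved resident
  have key : ∀ x ∈ S, ∀ h, Me x = some h →
      I.uq h ≤ (HRLQ.matchedTo Ms h).ncard ∧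
      (∀ r', Ms r' = some h → Me r' ≠ some h → r' ∈ S) := by
    intro x hx h hMex
    obtain ⟨h', hMex', hpref⟩ := hx
    rw [hMex] at hMex'
    injection hMex' with e
    subst e
    have hMsx : Ms x ≠ some h := by
      intro hc
      exact lt_irrefl _ (hpref.2 h hc)
    have hE : I.E x h := hpref.1
    have hno : ¬((HRLQ.matchedTo Ms h).ncard < I.uq h ∨
        ∃ r' ∈ HRLQ.matchedTo Ms h, I.hPref h x < I.hPref h r') :=
      fun hc => hMsStable x h ⟨hE, hMsx, hpref, hc⟩
    push_neg at hno
    obtain ⟨hfull, hbetter⟩ := hno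
    refine ⟨hfull, ?_⟩
    intro r' hMsr' hMer'
    have hr'mem : r' ∈ HRLQ.matchedTo Ms h := hMsr'
    have hne' : r' ≠ x := fun e => hMsx (e ▸ hMsr')
    have hlt : I.hPref h r' < I.hPref h x :=
      lt_of_le_of_ne (hbetter r' hr'mem) (fun e => hne' (hstrict.2 h e))
    have hnp : ¬ I.PrefersH r' h (Me r') :=
      fun hp => hMeEF r' x ⟨h, hMex, hp, hlt⟩
    have hE' : I.E r' h := hMs.1 r' h hMsr'
    rw [HRLQ.PrefersH] at hnp
    push_neg at hnp
    obtain ⟨h'', hMer'', hle⟩ := hnp hE'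
    have hne'' : h'' ≠ h := fun e => hMer' (e ▸ hMer'')
    have hltr : I.rPref r' h'' < I.rPref r' h :=
      lt_of_le_of_ne hle (fun e => hne'' (hstrict.1 r' e))
    refine ⟨h'', hMer'', hMe.1 r' h'' hMer'', ?_⟩
    intro h3 hh3
    rw [hMsr'] at hh3
    injection hh3 with e
    subst e
    exact hltr
  -- counting argument
  set Tf : Finset H := Finset.univ.filter (fun h => ∃ x ∈ S, Me x = some h) with hTf
  set Af : Finset R := Finset.univ.filter (fun x => ∃ h ∈ Tf, Ms x = some h) with hAf
  set Bf : Finset R := Finset.univ.filter (fun x => ∃ h ∈ Tf, Me x = some h) with hBf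
  have hTmem : ∀ h ∈ Tf, ∃ x ∈ S, Me x = some h := by
    intro h hh
    simpa [hTf] using hh
  have hAB : Af ⊆ Bf := by
    intro x hx
    simp only [hAf, Finset.mem_filter, Finset.mem_univ, true_and] at hx
    obtain ⟨h, hhT, hMsx⟩ := hx
    by_cases hc : Me x = some h
    · simp only [hBf, Finset.mem_filter, Finset.mem_univ, true_and]
      exact ⟨h, hhT, hc⟩
    · obtain ⟨y, hyS, hMey⟩ := hTmem h hhT
      have hxS : x ∈ S := (key y hyS h hMey).2 x hMsx hc
      obtain ⟨h', hMex', _⟩ := id hxS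
      have hh'T : h' ∈ Tf := by
        simp only [hTf, Finset.mem_filter, Finset.mem_univ, true_and]
        exact ⟨x, hxS, hMex'⟩
      simp only [hBf, Finset.mem_filter, Finset.mem_univ, true_and]
      exact ⟨h', hh'T, hMex'⟩
  -- fibers
  have hfiber : ∀ (M : R → Option H) (h : H),
      (HRLQ.matchedTo M h).ncard = (Finset.univ.filter (fun x => M x = some h)).card := by
    intro M h
    rw [Set.ncard_eq_toFinset_card']
    congr 1
    ext x
    rw [Set.mem_toFinset]
    simp [HRLQ.matchedTo]
  have hcardA : Af.card = ∑ h ∈ Tf, (Finset.univ.filter (fun x => Ms x = some h)).card := by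
    rw [← Finset.card_biUnion]
    · congr 1
      ext x
      simp [hAf, Finset.mem_biUnion]
    · intro h1 _ h2 _ hne12
      simp only [Finset.disjoint_left, Finset.mem_filter, Finset.mem_univ, true_and]
      intro a ha1 ha2
      rw [ha1] at ha2
      exact hne12 (Option.some.inj ha2)
  have hcardB : Bf.card = ∑ h ∈ Tf, (Finset.univ.filter (fun x => Me x = some h)).card := by
    rw [← Finset.card_biUnion]
    · congr 1
      ext x
      simp [hBf, Finset.mem_biUnion]
    · intro h1 _ h2 _ hne12
      simp only [Finset.disjoint_left, Finset.mem_filter, Finset.mem_univ, true_and]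
      intro a ha1 ha2
      rw [ha1] at ha2
      exact hne12 (Option.some.inj ha2)
  have hBA : Bf.card ≤ Af.card := by
    rw [hcardA, hcardB]
    apply Finset.sum_le_sum
    intro h hh
    obtain ⟨y, hyS, hMey⟩ := hTmem h hh
    have h1 : I.uq h ≤ (HRLQ.matchedTo Ms h).ncard := (key y hyS h hMey).1
    have h2 : (HRLQ.matchedTo Me h).ncard ≤ I.uq h := hMe.2 h
    rw [hfiber Ms h] at h1
    rw [hfiber Me h] at h2
    omega
  have hEq : Af = Bf := Finset.eq_of_subset_of_card_le hAB hBA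
  have hrB : r ∈ Bf := by
    simp only [hBf, Finset.mem_filter, Finset.mem_univ, true_and]
    refine ⟨h0, ?_, hh0⟩
    simp only [hTf, Finset.mem_filter, Finset.mem_univ, true_and]
    exact ⟨r, hr0S, hh0⟩
  rw [← hEq] at hrB
  simp only [hAf, Finset.mem_filter, Finset.mem_univ, true_and] at hrB
  obtain ⟨h, _, hMsr⟩ := hrB
  rw [hr] at hMsr
  exact absurd hMsr (by simp)
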